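/- Let θ, α be real numbers with 0 < θ < π and 0 < α < π, and set λ⁺ = cot(θ/2), λ⁻ = cot((θ+π)/2), μ⁺ = cot(α/2), μ⁻ = cot((α+π)/2). Then (λ⁺ − μ⁻) ≠ 0, (μ⁺ − λ⁻) ≠ 0, 1 + cos(θ − α) ≠ 0, and the cross-ratio satisfies ((λ⁺ − λ⁻)·(μ⁺ − μ⁻)) / ((λ⁺ − μ⁻)·(μ⁺ − λ⁻)) = 2 / (1 + cos(θ − α)). Moreover, this value equals 1 if and only if θ = α. -/

import Mathlib

open Real

/-- Let `θ, α` be real with `0 < θ < π` and `0 < α < π`, and set `λ⁺ = cot(θ/2)`,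
`λ⁻ = cot((θ+π)/2)`, `μ⁺ = cot(α/2)`, `μ⁻ = cot((α+π)/2)`.  Then `λ⁺ − μ⁻ ≠ 0`,
`μ⁺ − λ⁻ ≠ 0`, `1 + cos(θ − α) ≠ 0`, and the cross-ratio satisfies
`((λ⁺ − λ⁻)·(μ⁺ − μ⁻)) / ((λ⁺ − μ⁻)·(μ⁺ − λ⁻)) = 2 / (1 + cos(θ − α))`.
Moreover, this value equals `1` if and only if `θ = α`. -/
theorem lie_curvature_miyaoka_ozawa (θ α : ℝ)
    (hθ0 : 0 < θ) (hθπ : θ < π) (hα0 : 0 < α) (hαπ : α < π) :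
    Real.cot (θ / 2) - Real.cot ((α + π) / 2) ≠ 0 ∧
    Real.cot (α / 2) - Real.cot ((θ + π) / 2) ≠ 0 ∧
    1 + Real.cos (θ - α) ≠ 0 ∧
    ((Real.cot (θ / 2) - Real.cot ((θ + π) / 2)) *
        (Real.cot (α / 2) - Real.cot ((α + π) / 2))) /
      ((Real.cot (θ / 2) - Real.cot ((α + π) / 2)) *
        (Real.cot (α / 2) - Real.cot ((θ + π) / 2))) = 2 / (1 + Real.cos (θ - α)) ∧
    (((Real.cot (θ / 2) - Real.cot ((θ + π) / 2)) *
        (Real.cot (α / 2) - Real.cot ((α + π) / 2))) /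
      ((Real.cot (θ / 2) - Real.cot ((α + π) / 2)) *
        (Real.cot (α / 2) - Real.cot ((θ + π) / 2))) = 1 ↔ θ = α) := by
  have hpi := Real.pi_pos
  have hs1 : 0 < Real.sin (θ / 2) :=
    Real.sin_pos_of_pos_of_lt_pi (by linarith) (by linarith)
  have hc1 : 0 < Real.cos (θ / 2) :=
    Real.cos_pos_of_mem_Ioo ⟨by linarith, by linarith⟩
  have hs2 : 0 < Real.sin (α / 2) :=
    Real.sin_pos_of_pos_of_lt_pi (by linarith) (by linarith)
  have hc2 : 0 < Real.cos (α / 2) :=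
    Real.cos_pos_of_mem_Ioo ⟨by linarith, by linarith⟩
  have hcd : 0 < Real.cos (θ / 2 - α / 2) :=
    Real.cos_pos_of_mem_Ioo ⟨by linarith, by linarith⟩
  -- cot of shifted angles
  have eshift : ∀ x : ℝ, Real.cot ((x + π) / 2) = -Real.sin (x / 2) / Real.cos (x / 2) := by
    intro x
    have hx : (x + π) / 2 = x / 2 + π / 2 := by ring
    rw [hx, Real.cot_eq_cos_div_sin, Real.cos_add, Real.sin_add]
    simp
  have py1 := Real.sin_sq_add_cos_sq (θ / 2)
  have py2 := Real.sin_sq_add_cos_sq (α / 2)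
  have h1 : Real.cot (θ / 2) - Real.cot ((α + π) / 2)
      = Real.cos (θ / 2 - α / 2) / (Real.sin (θ / 2) * Real.cos (α / 2)) := by
    rw [eshift, Real.cot_eq_cos_div_sin, Real.cos_sub]
    field_simp
    ring
  have h2 : Real.cot (α / 2) - Real.cot ((θ + π) / 2)
      = Real.cos (θ / 2 - α / 2) / (Real.sin (α / 2) * Real.cos (θ / 2)) := by
    rw [eshift, Real.cot_eq_cos_div_sin, Real.cos_sub]
    field_simp
    ring
  have h3 : Real.cot (θ / 2) - Real.cot ((θ + π) / 2)
      = 1 / (Real.sin (θ / 2) * Real.cos (θ / 2)) := by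
    rw [eshift, Real.cot_eq_cos_div_sin]
    field_simp
    linarith [py1]
  have h4 : Real.cot (α / 2) - Real.cot ((α + π) / 2)
      = 1 / (Real.sin (α / 2) * Real.cos (α / 2)) := by
    rw [eshift, Real.cot_eq_cos_div_sin]
    field_simp
    linarith [py2]
  have key : 1 + Real.cos (θ - α) = 2 * Real.cos (θ / 2 - α / 2) ^ 2 := by
    have h : θ - α = 2 * (θ / 2 - α / 2) := by ring
    rw [h, Real.cos_two_mul]; ring
  have hne1 : Real.cot (θ / 2) - Real.cot ((α + π) / 2) ≠ 0 := by
    rw [h1]; positivity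
  have hne2 : Real.cot (α / 2) - Real.cot ((θ + π) / 2) ≠ 0 := by
    rw [h2]; positivity
  have hne3 : 1 + Real.cos (θ - α) ≠ 0 := by
    rw [key]; positivity
  have hmain : ((Real.cot (θ / 2) - Real.cot ((θ + π) / 2)) *
        (Real.cot (α / 2) - Real.cot ((α + π) / 2))) /
      ((Real.cot (θ / 2) - Real.cot ((α + π) / 2)) *
        (Real.cot (α / 2) - Real.cot ((θ + π) / 2))) = 2 / (1 + Real.cos (θ - α)) := by
    rw [h1, h2, h3, h4, key]
    generalize Real.sin (θ / 2) = a at hs1 ⊢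
    generalize Real.cos (θ / 2) = b at hc1 ⊢
    generalize Real.sin (α / 2) = c at hs2 ⊢
    generalize Real.cos (α / 2) = d at hc2 ⊢
    generalize Real.cos (θ / 2 - α / 2) = e at hcd ⊢
    field_simp
  refine ⟨hne1, hne2, hne3, hmain, ?_⟩
  rw [hmain]
  constructor
  · intro h
    have h2' : 1 + Real.cos (θ - α) = 2 := by
      field_simp at h
      linarith
    have hcos : Real.cos (θ - α) = 1 := by linarith
    have := (Real.cos_eq_one_iff_of_lt_of_lt (x := θ - α)
      (by linarith) (by linarith)).mp hcos
    linarith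
  · intro h
    subst h
    norm_num
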